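/- Let T₁ be the maximal torus of diagonal matrices in SU(2). Every smooth map γ : X → SU(2) with values in T₁ that lies in the identity component of the group of smooth maps X → T₁ (i.e. can be joined to the constant map id by a continuous path of smooth T₁-valued maps) belongs to the subgroup (SU(2), M_0(SU(2))) of M_0(SU(2)) generated by commutators of constant maps with elements of M_0(SU(2)). -/

import Mathlib

open scoped Manifold Topology
open Filter

noncomputable section

/-- The special unitary group `SU(2)`: 2×2 complex matrices `g` with `g⋆g = 1` and `det g = 1`. -/
abbrev SU2 : Type := Matrix.specialUnitaryGroup (Fin 2) ℂ

noncomputable instance : Group SU2 :=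
  { (inferInstance : Monoid SU2) with
    inv := fun g => ⟨star g.val, by
      rcases g with ⟨A, hA⟩
      rw [Matrix.mem_specialUnitaryGroup_iff] at hA ⊢
      refine ⟨Unitary.star_mem hA.1, ?_⟩
      rw [Matrix.star_eq_conjTranspose, Matrix.det_conjTranspose, hA.2, star_one]⟩
    inv_mul_cancel := fun g => Subtype.ext g.prop.1.1 }

/-- A map with values in `SU(2)` is smooth when all its matrix entries are smooth. -/
def SU2Smooth
    {EX : Type*} [NormedAddCommGroup EX] [NormedSpace ℝ EX]
    {HX : Type*} [TopologicalSpace HX] (IX : ModelWithCorners ℝ EX HX)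
    {X : Type*} [TopologicalSpace X] [ChartedSpace HX X] (γ : X → SU2) : Prop :=
  ∀ i j : Fin 2, ContMDiff IX 𝓘(ℝ, ℂ) (⊤ : ℕ∞) fun x => (γ x : Matrix (Fin 2) (Fin 2) ℂ) i j

/-- A family of maps with values in `SU(2)` is (jointly) continuous when all its matrix
entries are. -/
def SU2Cont {X : Type*} [TopologicalSpace X] (Γ : X → SU2) : Prop :=
  ∀ i j : Fin 2, Continuous fun p => (Γ p : Matrix (Fin 2) (Fin 2) ℂ) i j

private theorem ContMDiff.cmul
    {EX : Type*} [NormedAddCommGroup EX] [NormedSpace ℝ EX]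
    {HX : Type*} [TopologicalSpace HX] {IX : ModelWithCorners ℝ EX HX}
    {X : Type*} [TopologicalSpace X] [ChartedSpace HX X]
    {f g : X → ℂ} (hf : ContMDiff IX 𝓘(ℝ, ℂ) (⊤ : ℕ∞) f) (hg : ContMDiff IX 𝓘(ℝ, ℂ) (⊤ : ℕ∞) g) :
    ContMDiff IX 𝓘(ℝ, ℂ) (⊤ : ℕ∞) fun x => f x * g x :=
  ContMDiff.clm_apply ((ContinuousLinearMap.mul ℝ ℂ).contMDiff.comp hf) hg

private theorem su2_entry_mul {X : Type*} (α β : X → SU2) (x : X) (i j : Fin 2) :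
    ((α x * β x : SU2) : Matrix (Fin 2) (Fin 2) ℂ) i j
      = (α x : Matrix (Fin 2) (Fin 2) ℂ) i 0 * (β x : Matrix (Fin 2) (Fin 2) ℂ) 0 j
        + (α x : Matrix (Fin 2) (Fin 2) ℂ) i 1 * (β x : Matrix (Fin 2) (Fin 2) ℂ) 1 j := by
  show ((α x : Matrix (Fin 2) (Fin 2) ℂ) * (β x : Matrix (Fin 2) (Fin 2) ℂ)) i j = _
  rw [Matrix.mul_apply, Fin.sum_univ_two]

/-- The identity component `M₀(SU(2))` of the group `M(SU(2))` of smooth maps `X → SU(2)`: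
smooth maps that can be joined to the constant map `1` by a continuous path of smooth maps.
It is a subgroup of the group of all maps `X → SU(2)` with pointwise multiplication. -/
def su2M0
    {EX : Type*} [NormedAddCommGroup EX] [NormedSpace ℝ EX]
    {HX : Type*} [TopologicalSpace HX] (IX : ModelWithCorners ℝ EX HX)
    (X : Type*) [TopologicalSpace X] [ChartedSpace HX X] : Subgroup (X → SU2) where
  carrier := { γ | SU2Smooth IX γ ∧ ∃ Γ : X × unitInterval → SU2,
      SU2Cont Γ ∧ (∀ t : unitInterval, SU2Smooth IX fun x => Γ (x, t)) ∧
      (∀ x, Γ (x, 0) = γ x) ∧ (∀ x, Γ (x, 1) = 1) }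
  one_mem' :=
    ⟨fun _ _ => contMDiff_const, fun _ => 1, fun _ _ => continuous_const,
      fun _ _ _ => contMDiff_const, fun _ => rfl, fun _ => rfl⟩
  mul_mem' := by
    rintro γ δ ⟨hγs, Γ, hΓc, hΓs, hΓ0, hΓ1⟩ ⟨hδs, Δ, hΔc, hΔs, hΔ0, hΔ1⟩
    constructor
    · intro i j
      have h : (fun x => (((γ * δ) x : SU2) : Matrix (Fin 2) (Fin 2) ℂ) i j)
          = fun x => (γ x : Matrix (Fin 2) (Fin 2) ℂ) i 0 * (δ x : Matrix (Fin 2) (Fin 2) ℂ) 0 j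
            + (γ x : Matrix (Fin 2) (Fin 2) ℂ) i 1 * (δ x : Matrix (Fin 2) (Fin 2) ℂ) 1 j :=
        funext fun x => su2_entry_mul γ δ x i j
      rw [h]
      exact (ContMDiff.cmul (hγs i 0) (hδs 0 j)).add (ContMDiff.cmul (hγs i 1) (hδs 1 j))
    · refine ⟨fun p => Γ p * Δ p, ?_, ?_,
        fun x => show Γ (x, 0) * Δ (x, 0) = (γ * δ) x by rw [hΓ0, hΔ0]; rfl,
        fun x => show Γ (x, 1) * Δ (x, 1) = 1 by rw [hΓ1, hΔ1, one_mul]⟩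
      · intro i j
        have h : (fun p => ((Γ p * Δ p : SU2) : Matrix (Fin 2) (Fin 2) ℂ) i j)
            = fun p => (Γ p : Matrix (Fin 2) (Fin 2) ℂ) i 0 * (Δ p : Matrix (Fin 2) (Fin 2) ℂ) 0 j
              + (Γ p : Matrix (Fin 2) (Fin 2) ℂ) i 1 * (Δ p : Matrix (Fin 2) (Fin 2) ℂ) 1 j :=
          funext fun p => su2_entry_mul Γ Δ p i j
      -- entrywise continuity of the product
        rw [h]
        exact ((hΓc i 0).mul (hΔc 0 j)).add ((hΓc i 1).mul (hΔc 1 j))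
      · intro t i j
        have h : (fun x => ((Γ (x, t) * Δ (x, t) : SU2) : Matrix (Fin 2) (Fin 2) ℂ) i j)
            = fun x => (Γ (x, t) : Matrix (Fin 2) (Fin 2) ℂ) i 0 *
                (Δ (x, t) : Matrix (Fin 2) (Fin 2) ℂ) 0 j
              + (Γ (x, t) : Matrix (Fin 2) (Fin 2) ℂ) i 1 *
                (Δ (x, t) : Matrix (Fin 2) (Fin 2) ℂ) 1 j :=
          funext fun x => su2_entry_mul (fun x => Γ (x, t)) (fun x => Δ (x, t)) x i j
        rw [h]
        exact (ContMDiff.cmul (hΓs t i 0) (hΔs t 0 j)).add (ContMDiff.cmul (hΓs t i 1) (hΔs t 1 j))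
  inv_mem' := by
    rintro γ ⟨hγs, Γ, hΓc, hΓs, hΓ0, hΓ1⟩
    have entry_inv : ∀ (g : SU2) (i j : Fin 2),
        ((g⁻¹ : SU2) : Matrix (Fin 2) (Fin 2) ℂ) i j
          = (starRingEnd ℂ) ((g : Matrix (Fin 2) (Fin 2) ℂ) j i) := fun g i j => rfl
    constructor
    · intro i j
      have h : (fun x => ((γ⁻¹ x : SU2) : Matrix (Fin 2) (Fin 2) ℂ) i j)
          = fun x => (starRingEnd ℂ) ((γ x : Matrix (Fin 2) (Fin 2) ℂ) j i) :=
        funext fun x => entry_inv (γ x) i j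
      rw [h]
      exact (Complex.conjCLE.contDiff.contMDiff).comp (hγs j i)
    · refine ⟨fun p => (Γ p)⁻¹, ?_, ?_,
        fun x => show (Γ (x, 0))⁻¹ = γ⁻¹ x by rw [hΓ0]; rfl,
        fun x => show (Γ (x, 1))⁻¹ = 1 by rw [hΓ1, inv_one]⟩
      · intro i j
        have h : (fun p => (((Γ p)⁻¹ : SU2) : Matrix (Fin 2) (Fin 2) ℂ) i j)
            = fun p => (starRingEnd ℂ) ((Γ p : Matrix (Fin 2) (Fin 2) ℂ) j i) :=
          funext fun p => entry_inv (Γ p) i j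
        rw [h]
        exact Complex.conjCLE.continuous.comp (hΓc j i)
      · intro t i j
        have h : (fun x => (((Γ (x, t))⁻¹ : SU2) : Matrix (Fin 2) (Fin 2) ℂ) i j)
            = fun x => (starRingEnd ℂ) ((Γ (x, t) : Matrix (Fin 2) (Fin 2) ℂ) j i) :=
          funext fun x => entry_inv (Γ (x, t)) i j
        rw [h]
        exact (Complex.conjCLE.contDiff.contMDiff).comp (hΓs t j i)

section Aux

open ComplexConjugate

/-- The diagonal matrix `diag (z, conj z)`. -/
def Dmat (z : ℂ) : Matrix (Fin 2) (Fin 2) ℂ := !![z, 0; 0, conj z]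

theorem Dmem {z : ℂ} (hz : conj z * z = 1) :
    Dmat z ∈ Matrix.specialUnitaryGroup (Fin 2) ℂ := by
  rw [Matrix.mem_specialUnitaryGroup_iff]
  refine ⟨⟨?_, ?_⟩, ?_⟩
  · ext i j
    fin_cases i <;> fin_cases j <;>
      simp [Dmat, Matrix.mul_apply, Fin.sum_univ_two, Matrix.one_apply,
        Matrix.conjTranspose_apply, hz, mul_comm z (conj z)]
  · ext i j
    fin_cases i <;> fin_cases j <;>
      simp [Dmat, Matrix.mul_apply, Fin.sum_univ_two, Matrix.one_apply,
        Matrix.conjTranspose_apply, hz, mul_comm z (conj z)]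
  · rw [Matrix.det_fin_two]
    simp [Dmat, mul_comm z (conj z), hz]

/-- The diagonal special unitary matrix `diag (z, conj z)`. -/
def DSU (z : ℂ) (hz : conj z * z = 1) : SU2 := ⟨Dmat z, Dmem hz⟩

/-- The Weyl group element `w`. -/
def wSU : SU2 := ⟨!![0, -1; 1, 0], by
  rw [Matrix.mem_specialUnitaryGroup_iff]
  refine ⟨⟨?_, ?_⟩, ?_⟩
  · ext i j
    fin_cases i <;> fin_cases j <;>
      simp [Matrix.mul_apply, Fin.sum_univ_two, Matrix.one_apply, Matrix.conjTranspose_apply]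
  · ext i j
    fin_cases i <;> fin_cases j <;>
      simp [Matrix.mul_apply, Fin.sum_univ_two, Matrix.one_apply, Matrix.conjTranspose_apply]
  · rw [Matrix.det_fin_two]; simp⟩

theorem unit00 (g : SU2) (h10 : (g : Matrix (Fin 2) (Fin 2) ℂ) 1 0 = 0) :
    conj ((g : Matrix (Fin 2) (Fin 2) ℂ) 0 0) * (g : Matrix (Fin 2) (Fin 2) ℂ) 0 0 = 1 := by
  have hu : star (g : Matrix (Fin 2) (Fin 2) ℂ) * (g : Matrix (Fin 2) (Fin 2) ℂ) = 1 :=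
    g.prop.1.1
  have := congrFun (congrFun hu 0) 0
  simpa [Matrix.mul_apply, Fin.sum_univ_two, Matrix.star_eq_conjTranspose,
    Matrix.conjTranspose_apply, Matrix.one_apply, h10] using this

theorem diag_eq (g : SU2) (h01 : (g : Matrix (Fin 2) (Fin 2) ℂ) 0 1 = 0)
    (h10 : (g : Matrix (Fin 2) (Fin 2) ℂ) 1 0 = 0) :
    (g : Matrix (Fin 2) (Fin 2) ℂ) = Dmat ((g : Matrix (Fin 2) (Fin 2) ℂ) 0 0) := by
  set a := (g : Matrix (Fin 2) (Fin 2) ℂ) 0 0 with ha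
  have hdet : a * (g : Matrix (Fin 2) (Fin 2) ℂ) 1 1 = 1 := by
    have := (Matrix.mem_specialUnitaryGroup_iff.mp g.prop).2
    rw [Matrix.det_fin_two] at this
    rw [← this, h01]; ring
  have h11 : (g : Matrix (Fin 2) (Fin 2) ℂ) 1 1 = conj a := by
    have hu := unit00 g h10
    calc (g : Matrix (Fin 2) (Fin 2) ℂ) 1 1
        = (conj a * a) * (g : Matrix (Fin 2) (Fin 2) ℂ) 1 1 := by rw [hu, one_mul]
      _ = conj a * (a * (g : Matrix (Fin 2) (Fin 2) ℂ) 1 1) := by ring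
      _ = conj a := by rw [hdet, mul_one]
  ext i j
  fin_cases i <;> fin_cases j <;> simp [Dmat, h01, h10, h11, ← ha]

theorem re_pos_of_close {a b : ℂ} (ha : conj a * a = 1) (hb : conj b * b = 1)
    (h : ‖a - b‖ < 1) : 0 < (a * conj b).re := by
  have hna : Complex.normSq a = 1 := by
    have : ((Complex.normSq a : ℂ)) = 1 := by rw [Complex.normSq_eq_conj_mul_self, ha]
    exact_mod_cast this
  have hnb : Complex.normSq b = 1 := by
    have : ((Complex.normSq b : ℂ)) = 1 := by rw [Complex.normSq_eq_conj_mul_self, hb]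
    exact_mod_cast this
  have h2 : Complex.normSq (a - b) < 1 := by
    rw [← Complex.sq_norm]
    nlinarith [norm_nonneg (a - b)]
  simp only [Complex.normSq_apply, Complex.sub_re, Complex.sub_im] at hna hnb h2
  simp only [Complex.mul_re, Complex.conj_re, Complex.conj_im]
  nlinarith

variable {EX : Type*} [NormedAddCommGroup EX] [NormedSpace ℝ EX]
    {HX : Type*} [TopologicalSpace HX] {IX : ModelWithCorners ℝ EX HX}
    {X : Type*} [TopologicalSpace X] [ChartedSpace HX X]

theorem SU2Smooth.mulf {γ δ : X → SU2} (hγs : SU2Smooth IX γ) (hδs : SU2Smooth IX δ) :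
    SU2Smooth IX (fun x => γ x * δ x) := by
  intro i j
  have h : (fun x => ((γ x * δ x : SU2) : Matrix (Fin 2) (Fin 2) ℂ) i j)
      = fun x => (γ x : Matrix (Fin 2) (Fin 2) ℂ) i 0 * (δ x : Matrix (Fin 2) (Fin 2) ℂ) 0 j
        + (γ x : Matrix (Fin 2) (Fin 2) ℂ) i 1 * (δ x : Matrix (Fin 2) (Fin 2) ℂ) 1 j :=
    funext fun x => su2_entry_mul γ δ x i j
  rw [h]
  exact (ContMDiff.cmul (hγs i 0) (hδs 0 j)).add (ContMDiff.cmul (hγs i 1) (hδs 1 j))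

theorem SU2Smooth.invf {γ : X → SU2} (hγs : SU2Smooth IX γ) :
    SU2Smooth IX (fun x => (γ x)⁻¹) := by
  intro i j
  have h : (fun x => (((γ x)⁻¹ : SU2) : Matrix (Fin 2) (Fin 2) ℂ) i j)
      = fun x => (starRingEnd ℂ) ((γ x : Matrix (Fin 2) (Fin 2) ℂ) j i) := rfl
  rw [h]
  exact (Complex.conjCLE.contDiff.contMDiff).comp (hγs j i)

/-- Key step: a smooth diagonal map whose first entry avoids the closed negative real axis
is a commutator of the constant `w` with an element of `M₀`. -/
theorem key_mem (IX : ModelWithCorners ℝ EX HX) (X : Type*) [TopologicalSpace X]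
    [ChartedSpace HX X] (β : X → SU2) (hs : SU2Smooth IX β)
    (h01 : ∀ x, (β x : Matrix (Fin 2) (Fin 2) ℂ) 0 1 = 0)
    (h10 : ∀ x, (β x : Matrix (Fin 2) (Fin 2) ℂ) 1 0 = 0)
    (hre : ∀ x, 0 < ((β x : Matrix (Fin 2) (Fin 2) ℂ) 0 0).re) :
    ∃ (g : SU2) (δ : X → SU2), δ ∈ su2M0 IX X ∧
      β = (fun _ => g) * δ * (fun _ => g)⁻¹ * δ⁻¹ := by
  set ρ : X → ℂ := fun x => (β x : Matrix (Fin 2) (Fin 2) ℂ) 0 0 with hρdef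
  have hu : ∀ x, conj (ρ x) * ρ x = 1 := fun x => unit00 (β x) (h10 x)
  have hρ0 : ∀ x, ρ x ≠ 0 := by
    intro x h
    have := hu x
    rw [h] at this
    simp at this
  have habs : ∀ x, ‖ρ x‖ = 1 := by
    intro x
    have : ((Complex.normSq (ρ x) : ℂ)) = 1 := by
      rw [Complex.normSq_eq_conj_mul_self, hu x]
    have h1 : Complex.normSq (ρ x) = 1 := by exact_mod_cast this
    rw [Complex.norm_def, h1, Real.sqrt_one]
  have hslit : ∀ x, ρ x ∈ Complex.slitPlane := fun x =>
    Complex.mem_slitPlane_iff.mpr (Or.inl (hre x))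
  set f : X → ℂ := fun x => Complex.log (ρ x) with hfdef
  have hρsm : ContMDiff IX 𝓘(ℝ, ℂ) (⊤ : ℕ∞) ρ := hs 0 0
  have hfsm : ContMDiff IX 𝓘(ℝ, ℂ) (⊤ : ℕ∞) f := fun x =>
    ((Complex.contDiffAt_log (hslit x)).restrict_scalars ℝ).comp_contMDiffAt (hρsm x)
  have hconjf : ∀ x, conj (f x) = -f x := by
    intro x
    have hre0 : (f x).re = 0 := by
      simp [hfdef, Complex.log_re, habs x]
    apply Complex.ext <;> simp [hre0]
  set q : X → ℂ := fun x => (-2⁻¹ : ℂ) * f x with hqdef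
  have hqsm : ContMDiff IX 𝓘(ℝ, ℂ) (⊤ : ℕ∞) q := ContMDiff.cmul contMDiff_const hfsm
  have hconjq : ∀ x, conj (q x) = -q x := by
    intro x
    rw [hqdef]
    simp only [map_mul, map_neg, map_inv₀, hconjf x, map_ofNat]
    ring
  -- scaled exponents are purely imaginary
  have hscale : ∀ (r : ℝ) (x : X), conj ((r : ℂ) * q x) = -((r : ℂ) * q x) := by
    intro r x
    rw [map_mul, Complex.conj_ofReal, hconjq x]
    ring
  have hDexp : ∀ w : ℂ, conj w = -w → conj (Complex.exp w) * Complex.exp w = 1 := by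
    intro w hw
    rw [← Complex.exp_conj, hw, ← Complex.exp_add, neg_add_cancel, Complex.exp_zero]
  set δ : X → SU2 := fun x => DSU (Complex.exp (q x)) (hDexp _ (hconjq x)) with hδdef
  -- smoothness of the exponent and its exponential
  have hesm : ContMDiff IX 𝓘(ℝ, ℂ) (⊤ : ℕ∞) fun x => Complex.exp (q x) :=
    ((Complex.contDiff_exp (𝕜 := ℂ)).restrict_scalars ℝ).comp_contMDiff hqsm
  have hδsm : SU2Smooth IX δ := by
    intro i j
    fin_cases i <;> fin_cases j <;>
      simp only [hδdef, DSU, Dmat, Matrix.cons_val', Matrix.cons_val_zero, Matrix.cons_val_one,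
        Matrix.head_cons, Matrix.head_fin_const, Matrix.empty_val', Matrix.cons_val_fin_one]
    · exact hesm
    · exact contMDiff_const
    · exact contMDiff_const
    · exact (Complex.conjCLE.contDiff.contMDiff).comp hesm
  have hδM0 : δ ∈ su2M0 IX X := by
    refine ⟨hδsm, fun p => DSU (Complex.exp (((1 - (p.2 : ℝ) : ℝ) : ℂ) * (q p.1)))
      (hDexp _ (hscale _ _)), ?_, ?_, ?_, ?_⟩
    · -- joint continuity
      have hqc : Continuous q := hqsm.continuous
      have hwc : Continuous fun p : X × unitInterval =>
          Complex.exp (((1 - (p.2 : ℝ) : ℝ) : ℂ) * (q p.1)) := by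
        apply Complex.continuous_exp.comp
        exact ((Complex.continuous_ofReal.comp
          ((continuous_const.sub continuous_subtype_val).comp continuous_snd)).mul
          (hqc.comp continuous_fst))
      intro i j
      fin_cases i <;> fin_cases j <;>
        simp only [DSU, Dmat, Matrix.cons_val', Matrix.cons_val_zero, Matrix.cons_val_one,
          Matrix.head_cons, Matrix.head_fin_const, Matrix.empty_val', Matrix.cons_val_fin_one]
      · exact hwc
      · exact continuous_const
      · exact continuous_const
      · exact Complex.conjCLE.continuous.comp hwc
    · -- smooth time slices
      intro t
      have hesmt : ContMDiff IX 𝓘(ℝ, ℂ) (⊤ : ℕ∞) fun x =>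
          Complex.exp (((1 - (t : ℝ) : ℝ) : ℂ) * (q x)) :=
        ((Complex.contDiff_exp (𝕜 := ℂ)).restrict_scalars ℝ).comp_contMDiff
          (ContMDiff.cmul contMDiff_const hqsm)
      intro i j
      fin_cases i <;> fin_cases j <;>
        simp only [DSU, Dmat, Matrix.cons_val', Matrix.cons_val_zero, Matrix.cons_val_one,
          Matrix.head_cons, Matrix.head_fin_const, Matrix.empty_val', Matrix.cons_val_fin_one]
      · exact hesmt
      · exact contMDiff_const
      · exact contMDiff_const
      · exact (Complex.conjCLE.contDiff.contMDiff).comp hesmt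
    · -- value at 0
      intro x
      apply Subtype.ext
      show Dmat _ = Dmat _
      congr 1
      norm_num
    · -- value at 1
      intro x
      apply Subtype.ext
      show Dmat (Complex.exp _) = _
      have : (((1 - ((1 : unitInterval) : ℝ) : ℝ) : ℂ) * (q x)) = 0 := by
        norm_num
      rw [this, Complex.exp_zero]
      ext i j
      fin_cases i <;> fin_cases j <;> simp [Dmat, Matrix.one_apply]
  refine ⟨wSU, δ, hδM0, ?_⟩
  funext x
  apply Subtype.ext
  have hβval : (β x : Matrix (Fin 2) (Fin 2) ℂ) = Dmat (ρ x) := diag_eq (β x) (h01 x) (h10 x)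
  set e : ℂ := Complex.exp (q x) with hedef
  have he2 : conj e * conj e = ρ x := by
    rw [hedef, ← Complex.exp_conj, hconjq x, ← Complex.exp_add]
    have : -q x + -q x = f x := by rw [hqdef]; ring
    rw [this, hfdef]
    exact Complex.exp_log (hρ0 x)
  have he2' : e * e = conj (ρ x) := by
    have := congrArg conj he2
    simpa using this
  show (β x : Matrix (Fin 2) (Fin 2) ℂ)
      = ((wSU * δ x * wSU⁻¹ * (δ x)⁻¹ : SU2) : Matrix (Fin 2) (Fin 2) ℂ)
  have hrhs : ((wSU * δ x * wSU⁻¹ * (δ x)⁻¹ : SU2) : Matrix (Fin 2) (Fin 2) ℂ)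
      = (wSU : Matrix (Fin 2) (Fin 2) ℂ) * (δ x : Matrix (Fin 2) (Fin 2) ℂ)
        * star (wSU : Matrix (Fin 2) (Fin 2) ℂ) * star (δ x : Matrix (Fin 2) (Fin 2) ℂ) := rfl
  have hδval : (δ x : Matrix (Fin 2) (Fin 2) ℂ) = Dmat e := rfl
  rw [hβval, hrhs]
  ext i j
  have hws : star (!![0, -1; 1, 0] : Matrix (Fin 2) (Fin 2) ℂ) = !![0, 1; -1, 0] := by
    ext i j
    fin_cases i <;> fin_cases j <;>
      simp [Matrix.conjTranspose_apply]
  fin_cases i <;> fin_cases j <;>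
    simp [hδval, hws, wSU, Dmat, Matrix.mul_apply, Fin.sum_univ_two,
      Matrix.conjTranspose_apply, Complex.star_def, Matrix.vecMul_cons, Matrix.cons_vecMul,
      Matrix.empty_vecMul, smul_eq_mul] <;>
    first
      | linear_combination -he2
      | linear_combination -he2'

end Aux


/-- **Step one in the proof of perfectness.** Let `T₁` be the maximal torus of diagonal
matrices in `SU(2)`.  Every smooth map `γ : X → SU(2)` with values in `T₁` which lies in the
identity component of the group of smooth `T₁`-valued maps belongs to the subgroup
`(SU(2), M₀(SU(2)))` of `M₀(SU(2))` generated by commutators of constant maps with elements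
of `M₀(SU(2))`. -/
theorem torus_valued_maps_in_commutator_subgroup
    {EX : Type*} [NormedAddCommGroup EX] [NormedSpace ℝ EX]
    {HX : Type*} [TopologicalSpace HX] (IX : ModelWithCorners ℝ EX HX)
    (X : Type*) [TopologicalSpace X] [ChartedSpace HX X]
    [IsManifold IX (⊤ : ℕ∞) X] [CompactSpace X] [IX.Boundaryless]
    (γ : X → SU2) (hsm : SU2Smooth IX γ)
    (hdiag : ∀ x, (γ x : Matrix (Fin 2) (Fin 2) ℂ) 0 1 = 0 ∧
      (γ x : Matrix (Fin 2) (Fin 2) ℂ) 1 0 = 0)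
    (hpath : ∃ Γ : X × unitInterval → SU2, SU2Cont Γ ∧
      (∀ t : unitInterval, SU2Smooth IX fun x => Γ (x, t)) ∧
      (∀ p : X × unitInterval, (Γ p : Matrix (Fin 2) (Fin 2) ℂ) 0 1 = 0 ∧
        (Γ p : Matrix (Fin 2) (Fin 2) ℂ) 1 0 = 0) ∧
      (∀ x, Γ (x, 0) = γ x) ∧ (∀ x, Γ (x, 1) = 1)) :
    γ ∈ Subgroup.closure { c : X → SU2 | ∃ (g : SU2) (δ : X → SU2),
      δ ∈ su2M0 IX X ∧ c = (fun _ => g) * δ * (fun _ => g)⁻¹ * δ⁻¹ } := by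
  obtain ⟨Γ, hΓc, hΓs, hΓd, hΓ0, hΓ1⟩ := hpath
  let c : C(unitInterval, C(X, ℂ)) :=
    ContinuousMap.curry ⟨fun q : unitInterval × X => (Γ (q.2, q.1) : Matrix (Fin 2) (Fin 2) ℂ) 0 0,
      (hΓc 0 0).comp continuous_swap⟩
  have hcval : ∀ (t : unitInterval) (x : X), c t x = (Γ (x, t) : Matrix (Fin 2) (Fin 2) ℂ) 0 0 :=
    fun t x => rfl
  have huc : UniformContinuous ⇑c := CompactSpace.uniformContinuous_of_continuous c.continuous
  obtain ⟨d, hd, Hd⟩ := Metric.uniformContinuous_iff.mp huc 1 one_pos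
  obtain ⟨n, hn⟩ := exists_nat_one_div_lt hd
  set N : ℕ := n + 1 with hN
  have hNpos : (0 : ℝ) < (N : ℝ) := by positivity
  set tk : ℕ → unitInterval := fun k =>
    ⟨min ((k : ℝ) / (N : ℝ)) 1, le_min (by positivity) zero_le_one, min_le_right _ _⟩ with htk
  have ht0 : tk 0 = 0 := by
    apply Subtype.ext
    show min (((0 : ℕ) : ℝ) / (N : ℝ)) 1 = 0
    norm_num
  have htN : tk N = 1 := by
    apply Subtype.ext
    show min (((N : ℕ) : ℝ) / (N : ℝ)) 1 = 1
    rw [div_self (ne_of_gt hNpos), min_self]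
  have hstep : ∀ k : ℕ, dist (tk k) (tk (k + 1)) < d := by
    intro k
    have key : (((k + 1 : ℕ) : ℝ)) / N - (k : ℝ) / N = 1 / N := by push_cast; ring
    have hNinv : (0 : ℝ) < 1 / N := by positivity
    have hab : (k : ℝ) / N ≤ ((k + 1 : ℕ) : ℝ) / N := by linarith
    have hdiff : min (((k + 1 : ℕ) : ℝ) / N) 1 - min ((k : ℝ) / N) 1 ≤ 1 / N := by
      rcases le_total (((k + 1 : ℕ) : ℝ) / N) 1 with h | h
      · rw [min_eq_left h, min_eq_left (hab.trans h)]; linarith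
      · rw [min_eq_right h]
        rcases le_total ((k : ℝ) / N) 1 with h2 | h2
        · rw [min_eq_left h2]; linarith
        · rw [min_eq_right h2]; linarith
    have hmono : min ((k : ℝ) / N) 1 ≤ min (((k + 1 : ℕ) : ℝ) / N) 1 := min_le_min hab le_rfl
    have hdN : dist (tk k) (tk (k + 1)) ≤ 1 / N := by
      rw [Subtype.dist_eq, Real.dist_eq]
      show |min ((k : ℝ) / (N : ℝ)) 1 - min (((k + 1 : ℕ) : ℝ) / (N : ℝ)) 1| ≤ 1 / N
      rw [abs_of_nonpos (by linarith)]
      linarith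
    have hNd : 1 / (N : ℝ) < d := by rw [hN]; push_cast; exact hn
    exact hdN.trans_lt hNd
  have hclose : ∀ (k : ℕ) (x : X),
      ‖(Γ (x, tk k) : Matrix (Fin 2) (Fin 2) ℂ) 0 0
        - (Γ (x, tk (k + 1)) : Matrix (Fin 2) (Fin 2) ℂ) 0 0‖ < 1 := by
    intro k x
    have h1 : dist (c (tk k)) (c (tk (k + 1))) < 1 := Hd (hstep k)
    have h2 := (ContinuousMap.dist_apply_le_dist x).trans_lt h1
    rw [hcval, hcval, Complex.dist_eq] at h2
    exact h2
  have main : ∀ m : ℕ, (fun x => Γ (x, tk (N - m))) ∈ Subgroup.closure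
      { c : X → SU2 | ∃ (g : SU2) (δ : X → SU2),
        δ ∈ su2M0 IX X ∧ c = (fun _ => g) * δ * (fun _ => g)⁻¹ * δ⁻¹ } := by
    intro m
    induction m with
    | zero =>
      have h : (fun x => Γ (x, tk (N - 0))) = 1 := funext fun x => by
        rw [Nat.sub_zero, htN, hΓ1 x]; rfl
      rw [h]
      exact one_mem _
    | succ m ih =>
      by_cases hm : N ≤ m
      · have h : N - (m + 1) = N - m := by omega
        rw [h]; exact ih
      · push_neg at hm
        have hk1 : N - (m + 1) + 1 = N - m := by omega
        set k : ℕ := N - (m + 1) with hk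
        rw [← hk1] at ih
        set b : X → SU2 := fun x => Γ (x, tk (k + 1)) with hb
        set a : X → SU2 := fun x => Γ (x, tk k) with ha
        have hsmooth : SU2Smooth IX (a * b⁻¹) :=
          SU2Smooth.mulf (hΓs (tk k)) (SU2Smooth.invf (hΓs (tk (k + 1))))
        have hbinv : ∀ (x : X) (i j : Fin 2),
            ((b⁻¹ x : SU2) : Matrix (Fin 2) (Fin 2) ℂ) i j
              = (starRingEnd ℂ) ((b x : Matrix (Fin 2) (Fin 2) ℂ) j i) := fun x i j => rfl
        have hentry : ∀ (x : X) (i j : Fin 2),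
            (((a * b⁻¹) x : SU2) : Matrix (Fin 2) (Fin 2) ℂ) i j
              = (a x : Matrix (Fin 2) (Fin 2) ℂ) i 0
                  * (starRingEnd ℂ) ((b x : Matrix (Fin 2) (Fin 2) ℂ) j 0)
                + (a x : Matrix (Fin 2) (Fin 2) ℂ) i 1
                  * (starRingEnd ℂ) ((b x : Matrix (Fin 2) (Fin 2) ℂ) j 1) := by
          intro x i j
          have h := su2_entry_mul a b⁻¹ x i j
          rw [hbinv x 0 j, hbinv x 1 j] at h
          exact h
        have h01 : ∀ x, (((a * b⁻¹) x : SU2) : Matrix (Fin 2) (Fin 2) ℂ) 0 1 = 0 := by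
          intro x
          rw [hentry x 0 1]
          rw [(hΓd (x, tk k)).1, (hΓd (x, tk (k + 1))).2]
          simp
        have h10 : ∀ x, (((a * b⁻¹) x : SU2) : Matrix (Fin 2) (Fin 2) ℂ) 1 0 = 0 := by
          intro x
          rw [hentry x 1 0]
          rw [(hΓd (x, tk k)).2, (hΓd (x, tk (k + 1))).1]
          simp
        have hre : ∀ x, 0 < ((((a * b⁻¹) x : SU2) : Matrix (Fin 2) (Fin 2) ℂ) 0 0).re := by
          intro x
          rw [hentry x 0 0, (hΓd (x, tk k)).1, (hΓd (x, tk (k + 1))).1]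
          simp only [map_zero, mul_zero, zero_mul, add_zero]
          exact re_pos_of_close (unit00 (a x) (hΓd (x, tk k)).2)
            (unit00 (b x) (hΓd (x, tk (k + 1))).2) (hclose k x)
        have hmem := key_mem IX X (a * b⁻¹) hsmooth h01 h10 hre
        have hab : a = a * b⁻¹ * b := (inv_mul_cancel_right a b).symm
        rw [hab]
        exact mul_mem (Subgroup.subset_closure hmem) ih
  have hfin : (fun x => Γ (x, tk (N - N))) = γ := funext fun x => by
    rw [Nat.sub_self, ht0, hΓ0 x]
  rw [← hfin]
  exact main N
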